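/- arXiv:2106.04183 — 7 statements merged into one kernel-verified Lean document; each statement's English description precedes it below -/
import Mathlib

section
/- Let A be an n×n real symmetric negative definite matrix, B an n×m real matrix, and R an m×k real matrix with R^T R positive definite. Then the matrix A + B(R^T R)⁻¹B^T A⁻¹ is Hurwitz (all eigenvalues have negative real part). -/
open Matrix

open scoped ComplexOrder

private lemma ofReal_dot_aux {n' : ℕ} (N : Matrix (Fin n') (Fin n') ℝ) (p q : Fin n' → ℝ) :
    (fun i => (p i : ℂ)) ⬝ᵥ ((N.map Complex.ofReal) *ᵥ fun i => (q i : ℂ))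
      = ((p ⬝ᵥ (N *ᵥ q) : ℝ) : ℂ) := by
  have h1 : (N.map Complex.ofReal) *ᵥ (fun i => (q i : ℂ)) = fun i => ((N *ᵥ q) i : ℂ) := by
    funext i
    exact (RingHom.map_mulVec Complex.ofRealHom N q i).symm
  rw [h1]
  exact (RingHom.map_dotProduct Complex.ofRealHom p (N *ᵥ q)).symm

private lemma posDef_map_ofReal {n' : ℕ} {N : Matrix (Fin n') (Fin n') ℝ} (hN : N.PosDef) :
    (N.map Complex.ofReal).PosDef := by
  have hsym : Nᵀ = N := hN.1
  refine posDef_iff_dotProduct_mulVec.mpr ⟨?_, ?_⟩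
  · show (N.map Complex.ofReal)ᴴ = N.map Complex.ofReal
    have : (N.map Complex.ofReal)ᴴ = (Nᵀ).map Complex.ofReal := by
      ext i j
      simp [conjTranspose_apply, Complex.conj_ofReal]
    rw [this, hsym]
  · intro x hx
    set a : Fin n' → ℝ := fun i => (x i).re with ha
    set b : Fin n' → ℝ := fun i => (x i).im with hb
    set u : Fin n' → ℂ := fun i => (a i : ℂ) with hu
    set v : Fin n' → ℂ := fun i => (b i : ℂ) with hv
    set M : Matrix (Fin n') (Fin n') ℂ := N.map Complex.ofReal with hM
    have hxdec : x = u + Complex.I • v := by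
      funext i
      simp [hu, hv, ha, hb, Complex.ext_iff]
    have hstar : star x = u - Complex.I • v := by
      funext i
      simp [hxdec, hu, hv, Complex.ext_iff]
    have hswap : v ⬝ᵥ (M *ᵥ u) = u ⬝ᵥ (M *ᵥ v) := by
      rw [hM, hu, hv, ofReal_dot_aux, ofReal_dot_aux]
      congr 1
      rw [dotProduct_mulVec, ← hsym, vecMul_transpose, hsym, dotProduct_comm]
    have hq : star x ⬝ᵥ (M *ᵥ x)
        = ((a ⬝ᵥ (N *ᵥ a) + b ⬝ᵥ (N *ᵥ b) : ℝ) : ℂ) := by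
      have hMuu : u ⬝ᵥ (M *ᵥ u) = ((a ⬝ᵥ (N *ᵥ a) : ℝ) : ℂ) := ofReal_dot_aux N a a
      have hMvv : v ⬝ᵥ (M *ᵥ v) = ((b ⬝ᵥ (N *ᵥ b) : ℝ) : ℂ) := ofReal_dot_aux N b b
      have hMuv : u ⬝ᵥ (M *ᵥ v) = ((a ⬝ᵥ (N *ᵥ b) : ℝ) : ℂ) := ofReal_dot_aux N a b
      rw [hstar, hxdec]
      simp only [mulVec_add, mulVec_smul, dotProduct_add, sub_dotProduct,
        dotProduct_smul, smul_dotProduct, smul_eq_mul, hswap, hMuu, hMvv, hMuv]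
      push_cast
      linear_combination (-(b ⬝ᵥ (N *ᵥ b) : ℝ) : ℂ) * Complex.I_mul_I
    rw [hq]
    have hab : a ≠ 0 ∨ b ≠ 0 := by
      by_contra h
      push_neg at h
      apply hx
      funext i
      have h1 := congrFun h.1 i
      have h2 := congrFun h.2 i
      simp [ha, hb] at h1 h2
      exact Complex.ext h1 h2
    have hpos : 0 < a ⬝ᵥ (N *ᵥ a) + b ⬝ᵥ (N *ᵥ b) := by
      have hna : 0 ≤ a ⬝ᵥ (N *ᵥ a) := by
        simpa using hN.posSemidef.dotProduct_mulVec_nonneg a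
      have hnb : 0 ≤ b ⬝ᵥ (N *ᵥ b) := by
        simpa using hN.posSemidef.dotProduct_mulVec_nonneg b
      rcases hab with h | h
      · have := hN.dotProduct_mulVec_pos h
        simp only [star_trivial] at this
        linarith
      · have := hN.dotProduct_mulVec_pos h
        simp only [star_trivial] at this
        linarith
    exact_mod_cast Complex.zero_lt_real.mpr hpos

/-- If `A` is symmetric negative definite, `RᵀR ≻ 0`, then
`A + B (RᵀR)⁻¹ Bᵀ A⁻¹` is Hurwitz: every (complex) eigenvalue has negative real part. -/
theorem stmt4
    {n m k : ℕ}
    (A : Matrix (Fin n) (Fin n) ℝ) (hA : (-A).PosDef)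
    (B : Matrix (Fin n) (Fin m) ℝ)
    (R : Matrix (Fin k) (Fin m) ℝ) (hR : (Rᵀ * R).PosDef) :
    ∀ μ ∈ spectrum ℂ ((A + B * (Rᵀ * R)⁻¹ * Bᵀ * A⁻¹).map (Complex.ofReal)),
      μ.re < 0 := by
  intro μ hμ
  -- basic facts about A
  have hAsym : Aᵀ = A := by
    have h : (-A)ᴴ = -A := hA.1
    rw [conjTranspose_eq_transpose_of_trivial] at h
    simpa [transpose_neg] using h
  have hAdet : IsUnit A.det := by
    have h := hA.det_pos
    rw [det_neg] at h
    refine isUnit_iff_ne_zero.mpr ?_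
    intro h0
    rw [h0, mul_zero] at h
    exact lt_irrefl 0 h
  -- the positive definite matrix N = A*A + B (RᵀR)⁻¹ Bᵀ
  set S : Matrix (Fin n) (Fin n) ℝ := B * (Rᵀ * R)⁻¹ * Bᵀ with hS
  have hSpsd : S.PosSemidef := by
    have h := (hR.inv.posSemidef).mul_mul_conjTranspose_same B
    rwa [conjTranspose_eq_transpose_of_trivial] at h
  have hAA : (A * A).PosDef := by
    refine posDef_iff_dotProduct_mulVec.mpr ⟨?_, ?_⟩
    · show (A * A)ᴴ = A * A
      rw [conjTranspose_eq_transpose_of_trivial, transpose_mul, hAsym]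
    · intro x hx
      have hAx : A *ᵥ x ≠ 0 := by
        intro h0
        have := hA.dotProduct_mulVec_pos hx
        rw [neg_mulVec, h0, neg_zero, dotProduct_zero] at this
        exact lt_irrefl 0 this
      have : star x ⬝ᵥ ((A * A) *ᵥ x) = (A *ᵥ x) ⬝ᵥ (A *ᵥ x) := by
        rw [star_trivial, ← mulVec_mulVec, dotProduct_mulVec, ← hAsym, vecMul_transpose, hAsym]
      rw [this, dotProduct]
      obtain ⟨i, hi⟩ := Function.ne_iff.mp hAx
      exact Finset.sum_pos' (fun j _ => mul_self_nonneg _)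
        ⟨i, Finset.mem_univ i, mul_self_pos.mpr hi⟩
  set N : Matrix (Fin n) (Fin n) ℝ := A * A + S with hN
  have hNpd : N.PosDef := hAA.add_posSemidef hSpsd
  -- complexifications
  set f := Complex.ofRealHom with hf
  set Ac : Matrix (Fin n) (Fin n) ℂ := A.map Complex.ofReal with hAc
  set Nc : Matrix (Fin n) (Fin n) ℂ := N.map Complex.ofReal with hNc
  set Mc : Matrix (Fin n) (Fin n) ℂ :=
    (A + B * (Rᵀ * R)⁻¹ * Bᵀ * A⁻¹).map Complex.ofReal with hMc
  have hMA : (A + B * (Rᵀ * R)⁻¹ * Bᵀ * A⁻¹) * A = N := by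
    rw [add_mul, hN, hS, mul_assoc (B * (Rᵀ * R)⁻¹ * Bᵀ), nonsing_inv_mul A hAdet, mul_one]
  have hMcAc : Mc * Ac = Nc := by
    rw [hMc, hAc, hNc, ← hMA]
    exact (Matrix.map_mul (f := Complex.ofRealHom)).symm
  have hAcdet : IsUnit Ac.det := by
    have h := RingHom.map_det Complex.ofRealHom A
    simp only [RingHom.mapMatrix_apply] at h
    have h2 : Ac.det = (A.det : ℂ) := by rw [hAc]; exact h.symm
    rw [h2]
    exact isUnit_iff_ne_zero.mpr (Complex.ofReal_ne_zero.mpr hAdet.ne_zero)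
  -- extract an eigenvector
  rw [spectrum.mem_iff] at hμ
  have hdet : (algebraMap ℂ (Matrix (Fin n) (Fin n) ℂ) μ - Mc).det = 0 := by
    by_contra h
    exact hμ ((isUnit_iff_isUnit_det _).mpr (isUnit_iff_ne_zero.mpr h))
  obtain ⟨v, hv0, hv⟩ := (Matrix.exists_mulVec_eq_zero_iff).mpr hdet
  have hev : Mc *ᵥ v = μ • v := by
    have h := hv
    rw [sub_mulVec] at h
    have h2 : (algebraMap ℂ (Matrix (Fin n) (Fin n) ℂ) μ) *ᵥ v = μ • v := by
      rw [Algebra.algebraMap_eq_smul_one, smul_mulVec, one_mulVec]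
    rw [h2, sub_eq_zero] at h
    exact h.symm
  -- w = Ac⁻¹ v
  set w : Fin n → ℂ := Ac⁻¹ *ᵥ v with hw
  have hAw : Ac *ᵥ w = v := by
    rw [hw, mulVec_mulVec, mul_nonsing_inv Ac hAcdet, one_mulVec]
  have hw0 : w ≠ 0 := by
    intro h0
    apply hv0
    rw [← hAw, h0, mulVec_zero]
  have heq : Nc *ᵥ w = μ • (Ac *ᵥ w) := by
    rw [← hMcAc, ← mulVec_mulVec, hAw, hev]
  -- take quadratic forms
  have hkey : star w ⬝ᵥ (Nc *ᵥ w) = μ * (star w ⬝ᵥ (Ac *ᵥ w)) := by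
    rw [heq, dotProduct_smul, smul_eq_mul]
  set c : ℂ := star w ⬝ᵥ (Nc *ᵥ w) with hcdef
  set d : ℂ := star w ⬝ᵥ (Ac *ᵥ w) with hddef
  have hcpos : 0 < c := (posDef_map_ofReal hNpd).dotProduct_mulVec_pos hw0
  have hdneg : 0 < -d := by
    have h := (posDef_map_ofReal hA).dotProduct_mulVec_pos hw0
    have : (-A).map Complex.ofReal = -Ac := by
      rw [hAc]; ext i j; simp
    rw [this, neg_mulVec, dotProduct_neg] at h
    exact h
  have hcre : 0 < c.re ∧ c.im = 0 := by
    rw [Complex.lt_def] at hcpos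
    exact ⟨hcpos.1, hcpos.2.symm⟩
  have hdre : d.re < 0 ∧ d.im = 0 := by
    rw [Complex.lt_def] at hdneg
    constructor
    · have := hdneg.1; simp at this; linarith
    · have := hdneg.2; simp at this; linarith
  have hd0 : d ≠ 0 := by
    intro h
    rw [h] at hdre
    simp at hdre
  have hμeq : μ = c / d := by
    rw [hkey, mul_div_cancel_right₀ _ hd0]
  rw [hμeq]
  have hc : c = (c.re : ℂ) := Complex.ext rfl (by simp [hcre.2])
  have hd : d = (d.re : ℂ) := Complex.ext rfl (by simp [hdre.2])
  rw [hc, hd, ← Complex.ofReal_div, Complex.ofReal_re]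
  exact div_neg_of_pos_of_neg hcre.1 hdre.1
end

section
/- Let A be an n×n real symmetric negative definite matrix, B ∈ ℝ^{n×m}, and R ∈ ℝ^{m×k} with R^T R ≻ 0. Set P := -A⁻¹ (which is symmetric positive definite) and A_cl := A + B(R^T R)⁻¹B^T A⁻¹. Then A_cl^T P + P A_cl ⪯ -I (i.e., ⟨A_cl z, Pz⟩ + ⟨Pz, A_cl z⟩ ≤ -⟨z,z⟩ for all z). -/
open Matrix

/-- With `P = -A⁻¹` and `A_cl = A + B(RᵀR)⁻¹BᵀA⁻¹`, the Lyapunov inequality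
`⟨A_cl z, P z⟩ + ⟨P z, A_cl z⟩ ≤ -⟨z, z⟩` holds for all `z`. -/
theorem stmt5
    {n m k : ℕ}
    (A : Matrix (Fin n) (Fin n) ℝ) (hA : (-A).PosDef)
    (B : Matrix (Fin n) (Fin m) ℝ)
    (R : Matrix (Fin k) (Fin m) ℝ) (hR : (Rᵀ * R).PosDef)
    (P : Matrix (Fin n) (Fin n) ℝ) (hP : P = -A⁻¹)
    (Acl : Matrix (Fin n) (Fin n) ℝ) (hAcl : Acl = A + B * (Rᵀ * R)⁻¹ * Bᵀ * A⁻¹) :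
    ∀ z : Fin n → ℝ,
      (Acl *ᵥ z) ⬝ᵥ (P *ᵥ z) + (P *ᵥ z) ⬝ᵥ (Acl *ᵥ z) ≤ -(z ⬝ᵥ z) := by
  intro z
  -- basic facts
  have hdetA : IsUnit A.det := by
    have h1 : (0:ℝ) < (-A).det := hA.det_pos
    have h2 : (-A).det = (-1)^n * A.det := by
      simpa using Matrix.det_smul A ((-1 : ℝ))
    have : A.det ≠ 0 := by
      intro h0
      rw [h2, h0, mul_zero] at h1
      exact lt_irrefl 0 h1
    exact isUnit_iff_ne_zero.mpr this
  have hAinv : A * A⁻¹ = 1 := Matrix.mul_nonsing_inv A hdetA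
  have hinvA : A⁻¹ * A = 1 := Matrix.nonsing_inv_mul A hdetA
  set M : Matrix (Fin n) (Fin n) ℝ := B * (Rᵀ * R)⁻¹ * Bᵀ with hM
  have hMsd : M.PosSemidef := by
    have := (hR.inv.posSemidef).mul_mul_conjTranspose_same B
    simpa [hM, Matrix.mul_assoc, Matrix.conjTranspose_eq_transpose_of_trivial] using this
  set y : Fin n → ℝ := A⁻¹ *ᵥ z with hy
  have hAy : A *ᵥ y = z := by
    rw [hy, Matrix.mulVec_mulVec, hAinv, Matrix.one_mulVec]
  have hAsym : Aᵀ = A := by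
    have h := hA.isHermitian
    have : (-A)ᵀ = -A := h
    simpa [Matrix.transpose_neg, neg_eq_iff_eq_neg] using this
  have hPz : P *ᵥ z = -y := by
    rw [hP, hy, Matrix.neg_mulVec]
  have hAclz : Acl *ᵥ z = A *ᵥ z + M *ᵥ y := by
    rw [hAcl, Matrix.add_mulVec, hM, hy, Matrix.mulVec_mulVec]
  have key1 : (A *ᵥ z) ⬝ᵥ y = z ⬝ᵥ z := by
    have h1 : y ᵥ* A = A *ᵥ y := by
      rw [← hAsym, Matrix.vecMul_transpose, hAsym]
    rw [dotProduct_comm, Matrix.dotProduct_mulVec, h1, hAy]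
  have hMy : (0:ℝ) ≤ y ⬝ᵥ (M *ᵥ y) := by
    have := hMsd.dotProduct_mulVec_nonneg y
    simpa using this
  have hzz : (0:ℝ) ≤ z ⬝ᵥ z := by
    simpa [dotProduct] using Finset.sum_nonneg fun i _ => mul_self_nonneg (z i)
  have e1 : (Acl *ᵥ z) ⬝ᵥ (P *ᵥ z) = -(z ⬝ᵥ z) - (M *ᵥ y) ⬝ᵥ y := by
    rw [hAclz, hPz, add_dotProduct, dotProduct_neg,
      dotProduct_neg, key1]
    ring
  have e2 : (P *ᵥ z) ⬝ᵥ (Acl *ᵥ z) = -(z ⬝ᵥ z) - y ⬝ᵥ (M *ᵥ y) := by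
    rw [hAclz, hPz, dotProduct_add, neg_dotProduct,
      neg_dotProduct, dotProduct_comm y (A *ᵥ z), key1]
    ring
  have hcomm : (M *ᵥ y) ⬝ᵥ y = y ⬝ᵥ (M *ᵥ y) := dotProduct_comm _ _
  rw [e1, e2, hcomm]
  linarith
end

section
/- Let A be a bounded self-adjoint strictly negative operator on Z, B ∈ L(U,Z), R ∈ L(U,R') with R*R coercive. Let G(jω) := [I; R(R*R)⁻¹B*A⁻¹] (jωI - A - B(R*R)⁻¹B*A⁻¹)⁻¹. Then for all real ω, ‖G(jω)‖ ≤ ‖G(0)‖; i.e., the closed-loop transfer function attains its maximum gain at frequency zero. -/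
open scoped ComplexInnerProductSpace
open ContinuousLinearMap

set_option maxHeartbeats 1000000 in
/-- The closed-loop transfer function
`G(jω) = [I; R(R*R)⁻¹B*A⁻¹](jωI - A - B(R*R)⁻¹B*A⁻¹)⁻¹` attains its maximum gain at `ω = 0`:
`‖G(jω)‖ ≤ ‖G(0)‖` for all real `ω`. -/
theorem stmt7
    {Z U R' : Type*}
    [NormedAddCommGroup Z] [InnerProductSpace ℂ Z] [CompleteSpace Z]
    [NormedAddCommGroup U] [InnerProductSpace ℂ U] [CompleteSpace U]
    [NormedAddCommGroup R' ] [InnerProductSpace ℂ R'] [CompleteSpace R']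
    (A : Z →L[ℂ] Z) (hA : IsSelfAdjoint A)
    (m : ℝ) (hm : 0 < m) (hAneg : ∀ z : Z, (⟪A z, z⟫).re ≤ -m * ‖z‖ ^ 2)
    (B : U →L[ℂ] Z) (R : U →L[ℂ] R')
    (c : ℝ) (hc : 0 < c) (hR : ∀ u : U, c * ‖u‖ ^ 2 ≤ (⟪(adjoint R ∘L R) u, u⟫).re)
    (Ainv : Z →L[ℂ] Z) (hAinv₁ : A ∘L Ainv = 1) (hAinv₂ : Ainv ∘L A = 1)
    (RRinv : U →L[ℂ] U) (hRRinv₁ : (adjoint R ∘L R) ∘L RRinv = 1)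
    (hRRinv₂ : RRinv ∘L (adjoint R ∘L R) = 1)
    -- closed-loop generator and output operator
    (Acl : Z →L[ℂ] Z) (hAcl : Acl = A + B ∘L RRinv ∘L adjoint B ∘L Ainv)
    (F : Z →L[ℂ] WithLp 2 (Z × R'))
    (hF : F = ((WithLp.prodContinuousLinearEquiv 2 ℂ Z R').symm :
                Z × R' →L[ℂ] WithLp 2 (Z × R')) ∘L
          (ContinuousLinearMap.id ℂ Z).prod (R ∘L RRinv ∘L adjoint B ∘L Ainv))
    -- resolvents of the closed loop at frequency `ω` and at frequency `0`
    (ω : ℝ) (Resω : Z →L[ℂ] Z)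
    (hResω₁ : (((ω : ℂ) * Complex.I) • (1 : Z →L[ℂ] Z) - Acl) ∘L Resω = 1)
    (hResω₂ : Resω ∘L (((ω : ℂ) * Complex.I) • (1 : Z →L[ℂ] Z) - Acl) = 1)
    (Res0 : Z →L[ℂ] Z)
    (hRes0₁ : (-Acl) ∘L Res0 = 1) (hRes0₂ : Res0 ∘L (-Acl) = 1) :
    ‖F ∘L Resω‖ ≤ ‖F ∘L Res0‖ := by
  -- pointwise versions of the inverse hypotheses
  have hAinv₁' : ∀ z, A (Ainv z) = z := fun z => by
    simpa using ContinuousLinearMap.ext_iff.mp hAinv₁ z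
  have hAinv₂' : ∀ z, Ainv (A z) = z := fun z => by
    simpa using ContinuousLinearMap.ext_iff.mp hAinv₂ z
  have hRRinv₁' : ∀ w, (adjoint R) (R (RRinv w)) = w := fun w => by
    simpa using ContinuousLinearMap.ext_iff.mp hRRinv₁ w
  -- RRinv is self-adjoint
  have hRR_sa : adjoint (adjoint R ∘L R) = adjoint R ∘L R := by
    rw [adjoint_comp, adjoint_adjoint]
  have hone : adjoint (1 : U →L[ℂ] U) = 1 := by
    rw [← star_eq_adjoint, star_one]
  have h2 : (adjoint R ∘L R) ∘L adjoint RRinv = 1 := by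
    have := congrArg adjoint hRRinv₂
    rwa [adjoint_comp, hRR_sa, hone] at this
  have hRRinv_sa : adjoint RRinv = RRinv := by
    calc adjoint RRinv = (RRinv ∘L (adjoint R ∘L R)) ∘L adjoint RRinv := by
          rw [hRRinv₂]; ext w; simp
      _ = RRinv ∘L ((adjoint R ∘L R) ∘L adjoint RRinv) := by rw [comp_assoc]
      _ = RRinv := by rw [h2]; ext w; simp
  -- the operator S = Acl ∘ A and its inverse
  set SS : Z →L[ℂ] Z := Acl ∘L A with hSSdef
  set Sinv : Z →L[ℂ] Z := -(Ainv ∘L Res0) with hSinvdef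
  have hSSapp : ∀ w, SS w = A (A w) + B (RRinv ((adjoint B) w)) := by
    intro w
    simp [hSSdef, hAcl, hAinv₂' w]
  have hSSinv : ∀ z, SS (Sinv z) = z := by
    intro z
    have h := ContinuousLinearMap.ext_iff.mp hRes0₁ z
    simp only [comp_apply, neg_apply, one_apply] at h
    simp [hSSdef, hSinvdef, hAinv₁', h]
  have hSinvSS : ∀ z, Sinv (SS z) = z := by
    intro z
    have h := ContinuousLinearMap.ext_iff.mp hRes0₂ (A z)
    simp only [comp_apply, neg_apply, one_apply, map_neg] at h
    have h' : Res0 (Acl (A z)) = -(A z) := by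
      have := congrArg Neg.neg h
      simpa using this
    simp [hSinvdef, hSSdef, h', hAinv₂']
  -- S is self-adjoint
  have hSS_eq : SS = A ∘L A + B ∘L (RRinv ∘L adjoint B) := by
    ext w; simpa using hSSapp w
  have hSS_sa : adjoint SS = SS := by
    rw [hSS_eq, map_add, adjoint_comp, adjoint_comp, adjoint_comp, adjoint_adjoint,
      hRRinv_sa, hA.adjoint_eq]
    ext w; simp
  -- norm formula for F ∘ A
  have hFA : ∀ w, ‖F (A w)‖ ^ 2 = (⟪SS w, w⟫).re := by
    intro w
    have h1 : F (A w) = ((WithLp.prodContinuousLinearEquiv 2 ℂ Z R').symm :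
        Z × R' →L[ℂ] WithLp 2 (Z × R')) (A w, R (RRinv ((adjoint B) w))) := by
      simp [hF, hAinv₂' w]
    have h2 : ‖R (RRinv ((adjoint B) w))‖ ^ 2
        = (⟪(adjoint B) w, RRinv ((adjoint B) w)⟫).re := by
      calc ‖R (RRinv ((adjoint B) w))‖ ^ 2
          = (⟪R (RRinv ((adjoint B) w)), R (RRinv ((adjoint B) w))⟫).re :=
            (inner_self_eq_norm_sq (𝕜 := ℂ) _).symm
        _ = (⟪(adjoint R) (R (RRinv ((adjoint B) w))), RRinv ((adjoint B) w)⟫).re := by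
            rw [adjoint_inner_left]
        _ = _ := by rw [hRRinv₁']
    have e1 : ⟪A (A w), w⟫ = ⟪A w, A w⟫ := by
      have h := adjoint_inner_left A w (A w)
      rwa [hA.adjoint_eq] at h
    have e2 : ⟪B (RRinv ((adjoint B) w)), w⟫ = ⟪RRinv ((adjoint B) w), (adjoint B) w⟫ := by
      have h := adjoint_inner_left (adjoint B) w (RRinv ((adjoint B) w))
      rwa [adjoint_adjoint] at h
    have hAw : (⟪A w, A w⟫).re = ‖A w‖ ^ 2 := inner_self_eq_norm_sq (𝕜 := ℂ) _
    have hsym : (⟪(adjoint B) w, RRinv ((adjoint B) w)⟫).re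
        = (⟪RRinv ((adjoint B) w), (adjoint B) w⟫).re := inner_re_symm (𝕜 := ℂ) _ _
    have h3 : (⟪SS w, w⟫).re
        = ‖A w‖ ^ 2 + (⟪RRinv ((adjoint B) w), (adjoint B) w⟫).re := by
      rw [hSSapp w, inner_add_left, e1, e2, Complex.add_re, hAw]
    rw [h3, h1, WithLp.prod_norm_sq_eq_of_L2]
    show ‖A w‖ ^ 2 + ‖R (RRinv ((adjoint B) w))‖ ^ 2 = _
    rw [h2, hsym]

  -- positivity of S
  have hSpos : ∀ w, 0 ≤ (⟪SS w, w⟫).re := fun w => by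
    rw [← hFA w]; positivity
  -- main pointwise estimate
  refine opNorm_le_bound _ (norm_nonneg (F ∘L Res0)) fun x => ?_
  set u := Ainv (Resω x) with hu
  set v := Ainv (Res0 x) with hv
  have hAu : A u = Resω x := hAinv₁' _
  have hAv : A v = Res0 x := hAinv₁' _
  have hxu : x = ((ω : ℂ) * Complex.I) • (A u) - SS u := by
    have h := ContinuousLinearMap.ext_iff.mp hResω₁ x
    simp only [comp_apply, sub_apply, smul_apply, one_apply, ContinuousLinearMap.one_apply] at h
    rw [← h, hAu]
    simp [hSSdef, hAu]
  have hxv : SS v = -x := by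
    have h := ContinuousLinearMap.ext_iff.mp hRes0₁ x
    simp only [comp_apply, neg_apply, one_apply] at h
    have : Acl (Res0 x) = -x := by
      have := congrArg Neg.neg h
      simpa using this
    simp [hSSdef, hAv, this]
  have hxv' : x = -(SS v) := by rw [hxv, neg_neg]
  have hSinvx : Sinv x = -v := by
    rw [hxv', map_neg, hSinvSS]
  have hNω : ‖F (Resω x)‖ ^ 2 = (⟪SS u, u⟫).re := by rw [← hAu, hFA u]
  have hN0 : ‖F (Res0 x)‖ ^ 2 = (⟪x, Sinv x⟫).re := by
    rw [← hAv, hFA v, hxv, hSinvx]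
    simp [inner_neg_left, inner_neg_right]
  -- key identity
  have hSx : Sinv x = ((ω : ℂ) * Complex.I) • Sinv (A u) - u := by
    rw [hxu, map_sub, map_smul, hSinvSS]
  have e1 : ⟪SS u, Sinv (A u)⟫ = ⟪u, A u⟫ := by
    have h := adjoint_inner_left SS (Sinv (A u)) u
    rw [hSS_sa, hSSinv] at h
    exact h
  have e2 : ⟪A u, u⟫ = ⟪u, A u⟫ := by
    have h := adjoint_inner_left A u u
    rwa [hA.adjoint_eq] at h
  have key : ⟪x, Sinv x⟫ = ((ω ^ 2 : ℝ) : ℂ) * ⟪A u, Sinv (A u)⟫ + ⟪SS u, u⟫ := by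
    rw [hSx]
    conv_lhs => rw [hxu]
    simp only [inner_sub_left, inner_sub_right, inner_smul_left, inner_smul_right,
      map_mul, Complex.conj_ofReal, Complex.conj_I, e1, e2]
    push_cast
    ring_nf
    simp [Complex.I_sq]
  have hposω : 0 ≤ (⟪A u, Sinv (A u)⟫).re := by
    have h := hSpos (Sinv (A u))
    rwa [hSSinv] at h
  have hle : ‖F (Resω x)‖ ^ 2 ≤ ‖F (Res0 x)‖ ^ 2 := by
    rw [hNω, hN0, key]
    rw [Complex.add_re, Complex.re_ofReal_mul]
    nlinarith [sq_nonneg ω]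
  have hfin : ‖F (Resω x)‖ ≤ ‖F (Res0 x)‖ := by
    nlinarith [norm_nonneg (F (Resω x)), norm_nonneg (F (Res0 x))]
  calc ‖(F ∘L Resω) x‖ = ‖F (Resω x)‖ := rfl
    _ ≤ ‖F (Res0 x)‖ := hfin
    _ = ‖(F ∘L Res0) x‖ := rfl
    _ ≤ ‖F ∘L Res0‖ * ‖x‖ := le_opNorm _ _
end

section
/- Let A ∈ ℝ^{n×n} be symmetric negative definite, B ∈ ℝ^{n×m}, H ∈ ℝ^{n×p}, and R ∈ ℝ^{m×m} with R^T R ≻ 0. With state feedback K = (R^T R)⁻¹B^T A⁻¹, the DC gain of the closed loop from d to ζ = (z, Ru) satisfies ‖G_K(0)‖ = ‖H^T (A² + B(R^T R)⁻¹B^T)⁻¹ H‖^{1/2}, where G_K(0) = -[I; R(R^T R)⁻¹B^T A⁻¹](A + B(R^T R)⁻¹B^T A⁻¹)⁻¹ H. -/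
open Matrix

/-- The spectral (ℓ² → ℓ²) operator norm of a real matrix. -/
noncomputable def specNorm {p q : Type*} [Fintype p] [Fintype q] [DecidableEq q]
    (M : Matrix p q ℝ) : ℝ :=
  ‖LinearMap.toContinuousLinearMap (Matrix.toEuclideanLin M)‖

lemma specNorm_eq_sqrt {p q : Type*} [Fintype p] [Fintype q] [DecidableEq p] [DecidableEq q]
    (M : Matrix p q ℝ) : specNorm M = Real.sqrt (specNorm (Mᵀ * M)) := by
  have hct : Mᴴ = Mᵀ := by ext i j; simp [Matrix.conjTranspose_apply]
  have h1 : Matrix.toEuclideanLin (Mᵀ * M)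
      = (LinearMap.adjoint (Matrix.toEuclideanLin M)).comp (Matrix.toEuclideanLin M) := by
    rw [← Matrix.toEuclideanLin_conjTranspose_eq_adjoint, hct,
      Matrix.toEuclideanLin_eq_toLin,
      Matrix.toLin_mul (PiLp.basisFun 2 ℝ q) (PiLp.basisFun 2 ℝ p) (PiLp.basisFun 2 ℝ q) Mᵀ M,
      ← Matrix.toEuclideanLin_eq_toLin, ← Matrix.toEuclideanLin_eq_toLin]
  set f := LinearMap.toContinuousLinearMap (Matrix.toEuclideanLin M) with hf
  have h2 : LinearMap.toContinuousLinearMap (Matrix.toEuclideanLin (Mᵀ * M))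
      = (ContinuousLinearMap.adjoint f) ∘L f := by
    apply ContinuousLinearMap.coe_injective
    rw [LinearMap.coe_toContinuousLinearMap, h1, ContinuousLinearMap.toLinearMap_comp,
      LinearMap.adjoint_eq_toCLM_adjoint]
    rfl
  rw [specNorm, specNorm, h2, ContinuousLinearMap.norm_adjoint_comp_self,
    Real.sqrt_mul_self (norm_nonneg _)]

lemma posDef_conjTranspose_mul_self' {n : Type*} [Fintype n] [DecidableEq n]
    (A : Matrix n n ℝ) (hA : IsUnit A) : (Aᴴ * A).PosDef := by
  refine Matrix.PosDef.of_dotProduct_mulVec_pos (Matrix.isHermitian_conjTranspose_mul_self A) fun x hx => ?_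
  rw [← Matrix.mulVec_mulVec, Matrix.dotProduct_mulVec, Matrix.vecMul_conjTranspose, star_star]
  refine Matrix.dotProduct_star_self_pos_iff.mpr ?_
  exact (Matrix.mulVec_injective_iff_isUnit.mpr hA).ne_iff' (by simp) |>.2 hx

/-- With `K = (RᵀR)⁻¹BᵀA⁻¹`, the DC gain of the closed loop satisfies
`‖G_K(0)‖ = ‖Hᵀ(A² + B(RᵀR)⁻¹Bᵀ)⁻¹H‖^{1/2}`. -/
theorem stmt8
    {n m p : ℕ}
    (A : Matrix (Fin n) (Fin n) ℝ) (hA : (-A).PosDef)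
    (B : Matrix (Fin n) (Fin m) ℝ)
    (H : Matrix (Fin n) (Fin p) ℝ)
    (R : Matrix (Fin m) (Fin m) ℝ) (hR : (Rᵀ * R).PosDef)
    (K : Matrix (Fin m) (Fin n) ℝ) (hK : K = (Rᵀ * R)⁻¹ * Bᵀ * A⁻¹)
    (G0 : Matrix (Fin n ⊕ Fin m) (Fin p) ℝ)
    (hG0 : G0 = -(fromRows (1 : Matrix (Fin n) (Fin n) ℝ) (R * K)) * (A + B * K)⁻¹ * H) :
    specNorm G0 = Real.sqrt (specNorm (Hᵀ * (A * A + B * (Rᵀ * R)⁻¹ * Bᵀ)⁻¹ * H)) := by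
  set S := (Rᵀ * R)⁻¹ with hSdef
  -- basic symmetry / invertibility facts
  have hRdet : IsUnit (Rᵀ * R).det := (Matrix.isUnit_iff_isUnit_det _).mp hR.isUnit
  have hSRR : S * (Rᵀ * R) = 1 := Matrix.nonsing_inv_mul _ hRdet
  have hAsym : Aᵀ = A := by
    have h := hA.isHermitian
    have h2 : (-A)ᵀ = -A := by
      have : (-A)ᴴ = (-A)ᵀ := by ext i j; simp [Matrix.conjTranspose_apply]
      rw [← this, h]
    simpa using congrArg Neg.neg h2
  have hAu : IsUnit A := by have := hA.isUnit.neg; rwa [neg_neg] at this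
  have hAdet : IsUnit A.det := (Matrix.isUnit_iff_isUnit_det _).mp hAu
  have hAiA : A⁻¹ * A = 1 := Matrix.nonsing_inv_mul _ hAdet
  have hAAi : A * A⁻¹ = 1 := Matrix.mul_nonsing_inv _ hAdet
  have hSsym : Sᵀ = S := by
    rw [hSdef, Matrix.transpose_nonsing_inv]
    congr 1
    rw [Matrix.transpose_mul, Matrix.transpose_transpose]
  have hSpd : S.PosDef := hR.inv
  set Mm := A * A + B * S * Bᵀ with hMdef
  have hMsym : Mmᵀ = Mm := by
    rw [hMdef, Matrix.transpose_add]
    congr 1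
    · rw [Matrix.transpose_mul, hAsym]
    · rw [Matrix.transpose_mul, Matrix.transpose_mul, Matrix.transpose_transpose, hSsym,
        Matrix.mul_assoc]
  have hMpd : Mm.PosDef := by
    rw [hMdef]
    have h1 : (A * A).PosDef := by
      have := posDef_conjTranspose_mul_self' A hAu
      have hc : Aᴴ = Aᵀ := by ext i j; simp [Matrix.conjTranspose_apply]
      rwa [hc, hAsym] at this
    have h2 : (B * S * Bᵀ).PosSemidef := by
      have := hSpd.posSemidef.mul_mul_conjTranspose_same B
      have hc : Bᴴ = Bᵀ := by ext i j; simp [Matrix.conjTranspose_apply]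
      rwa [hc] at this
    exact h1.add_posSemidef h2
  have hMdet : IsUnit Mm.det := (Matrix.isUnit_iff_isUnit_det _).mp hMpd.isUnit
  have hMiM : Mm⁻¹ * Mm = 1 := Matrix.nonsing_inv_mul _ hMdet
  -- cancellation helpers
  have cA : ∀ {k : ℕ} (X : Matrix (Fin n) (Fin k) ℝ), A * (A⁻¹ * X) = X := by
    intro k X; rw [← Matrix.mul_assoc, hAAi, Matrix.one_mul]
  have cAi : ∀ {k : ℕ} (X : Matrix (Fin n) (Fin k) ℝ), A⁻¹ * (A * X) = X := by
    intro k X; rw [← Matrix.mul_assoc, hAiA, Matrix.one_mul]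
  have cS : ∀ {k : ℕ} (X : Matrix (Fin m) (Fin k) ℝ), S * (Rᵀ * (R * X)) = X := by
    intro k X
    rw [← Matrix.mul_assoc Rᵀ R X, ← Matrix.mul_assoc, hSRR, Matrix.one_mul]
  have cM : ∀ (X : Matrix (Fin n) (Fin p) ℝ), Mm⁻¹ * (Mm * X) = X := by
    intro X; rw [← Matrix.mul_assoc, hMiM, Matrix.one_mul]
  -- K transpose
  have hKt : Kᵀ = A⁻¹ * (B * S) := by
    rw [hK, Matrix.transpose_mul, Matrix.transpose_mul, Matrix.transpose_transpose, hSsym,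
      Matrix.transpose_nonsing_inv, hAsym]
  -- closed-loop inverse
  have hABK : A + B * K = Mm * A⁻¹ := by
    rw [hK, hMdef, Matrix.add_mul]
    congr 1
    · rw [Matrix.mul_assoc, hAAi, Matrix.mul_one]
    · simp only [hSdef, Matrix.mul_assoc]
  have hCinv : (A + B * K)⁻¹ = A * Mm⁻¹ := by
    rw [hABK, Matrix.mul_inv_rev, Matrix.nonsing_inv_nonsing_inv _ hAdet]
  have hCt : ((A + B * K)⁻¹)ᵀ = Mm⁻¹ * A := by
    rw [hCinv, Matrix.transpose_mul, hAsym, Matrix.transpose_nonsing_inv, hMsym]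
  -- the middle identity
  have hmidA : A * ((1 + Kᵀ * (Rᵀ * R) * K) * A) = Mm := by
    rw [Matrix.add_mul, Matrix.one_mul, Matrix.mul_add, hMdef]
    congr 1
    rw [hKt, hK]
    simp only [Matrix.mul_assoc]
    rw [cA, cS, hAiA, Matrix.mul_one]
  have hmidA' : ∀ (Z : Matrix (Fin n) (Fin p) ℝ),
      A * ((1 + Kᵀ * (Rᵀ * R) * K) * (A * Z)) = Mm * Z := by
    intro Z
    rw [← Matrix.mul_assoc (1 + Kᵀ * (Rᵀ * R) * K) A Z, ← Matrix.mul_assoc, ← Matrix.mul_assoc,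
      Matrix.mul_assoc A _ A, hmidA]
  -- Fᵀ F
  set F := fromRows (1 : Matrix (Fin n) (Fin n) ℝ) (R * K) with hF
  have hFtF : Fᵀ * F = 1 + Kᵀ * (Rᵀ * R) * K := by
    rw [hF, Matrix.transpose_fromRows, Matrix.fromCols_mul_fromRows]
    simp [Matrix.transpose_mul, Matrix.mul_assoc]
  -- main computation
  have hGG : G0ᵀ * G0 = Hᵀ * (Mm⁻¹ * H) := by
    have hG0' : G0 = -(F * ((A + B * K)⁻¹ * H)) := by
      rw [hG0]; simp [Matrix.neg_mul, Matrix.mul_assoc]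
    calc G0ᵀ * G0
        = ((A + B * K)⁻¹ * H)ᵀ * ((Fᵀ * F) * ((A + B * K)⁻¹ * H)) := by
          rw [hG0']
          simp only [Matrix.transpose_neg, Matrix.neg_mul, Matrix.mul_neg, neg_neg,
            Matrix.transpose_mul, Matrix.mul_assoc]
      _ = Hᵀ * (Mm⁻¹ * (A * ((1 + Kᵀ * (Rᵀ * R) * K) * (A * (Mm⁻¹ * H))))) := by
          rw [hFtF, Matrix.transpose_mul, hCt, hCinv]
          simp only [Matrix.mul_assoc]
      _ = Hᵀ * (Mm⁻¹ * (Mm * (Mm⁻¹ * H))) := by rw [hmidA']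
      _ = Hᵀ * (Mm⁻¹ * H) := by rw [cM]
  rw [specNorm_eq_sqrt, hGG, ← Matrix.mul_assoc]
end

section
/- Let A ∈ ℝ^{n×n} be symmetric negative definite, B ∈ ℝ^{n×m}, H ∈ ℝ^{n×p}, R ∈ ℝ^{m×m} with R^T R ≻ 0. For any K ∈ ℝ^{m×n} such that A + BK is invertible, the DC closed-loop gain satisfies ‖[I; RK](A + BK)⁻¹H‖ ≥ ‖H^T(A² + B(R^T R)⁻¹B^T)⁻¹H‖^{1/2}. -/
open Matrix

open scoped Matrix.Norms.L2Operator

lemma specNorm_eq {p q : Type*} [Fintype p] [Fintype q] [DecidableEq q] (M : Matrix p q ℝ) :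
    specNorm M = ‖M‖ := rfl

lemma norm_symm_sq {ι : Type*} [Fintype ι] (v : ι → ℝ) :
    ‖((WithLp.equiv 2 (ι → ℝ)).symm v : EuclideanSpace ℝ ι)‖ ^ 2 = v ⬝ᵥ v := by
  rw [EuclideanSpace.norm_eq, Real.sq_sqrt (by positivity)]
  simp [dotProduct, Real.norm_eq_abs, sq_abs, sq]

lemma dot_cs {ι : Type*} [Fintype ι] (u v : ι → ℝ) :
    u ⬝ᵥ v ≤ Real.sqrt (u ⬝ᵥ u) * Real.sqrt (v ⬝ᵥ v) := by
  have h := Finset.sum_mul_sq_le_sq_mul_sq Finset.univ u v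
  have h2 : (u ⬝ᵥ v) ^ 2 ≤ (u ⬝ᵥ u) * (v ⬝ᵥ v) := by
    simpa [dotProduct, sq] using h
  calc u ⬝ᵥ v ≤ |u ⬝ᵥ v| := le_abs_self _
    _ = Real.sqrt ((u ⬝ᵥ v) ^ 2) := (Real.sqrt_sq_eq_abs _).symm
    _ ≤ Real.sqrt ((u ⬝ᵥ u) * (v ⬝ᵥ v)) := Real.sqrt_le_sqrt h2
    _ = _ := Real.sqrt_mul (by simpa [dotProduct, sq] using Finset.sum_nonneg fun i _ => mul_self_nonneg (u i)) _

lemma dot_mulVec_psd_nonneg {ι : Type*} [Fintype ι] {X : Matrix ι ι ℝ} (hX : X.PosSemidef)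
    (a : ι → ℝ) : 0 ≤ a ⬝ᵥ (X *ᵥ a) := by simpa using hX.dotProduct_mulVec_nonneg a

open scoped MatrixOrder in
lemma psd_cs {ι : Type*} [Fintype ι] [DecidableEq ι] {X : Matrix ι ι ℝ} (hX : X.PosSemidef)
    (a b : ι → ℝ) :
    a ⬝ᵥ (X *ᵥ b) ≤ Real.sqrt (a ⬝ᵥ (X *ᵥ a)) * Real.sqrt (b ⬝ᵥ (X *ᵥ b)) := by
  obtain ⟨s, hs, rfl⟩ : ∃ s : Matrix ι ι ℝ, s.IsHermitian ∧ s * s = X :=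
    ⟨CFC.sqrt X, (CFC.sqrt_nonneg X).posSemidef.isHermitian, CFC.sqrt_mul_sqrt_self X hX.nonneg⟩
  have key : ∀ c d : ι → ℝ, c ⬝ᵥ ((s * s) *ᵥ d) = (s *ᵥ c) ⬝ᵥ (s *ᵥ d) := by
    intro c d
    rw [← mulVec_mulVec, dotProduct_mulVec c s, ← mulVec_transpose]
    congr 1
    rw [show sᵀ = s from by simpa [conjTranspose_eq_transpose_of_trivial] using hs.eq]
  rw [key, key, key]
  exact dot_cs _ _

lemma dot_symm_matrix {ι : Type*} [Fintype ι] {X : Matrix ι ι ℝ} (h : X.IsHermitian)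
    (a b : ι → ℝ) : a ⬝ᵥ (X *ᵥ b) = b ⬝ᵥ (X *ᵥ a) := by
  rw [dotProduct_mulVec a X b, ← mulVec_transpose,
    show Xᵀ = X from by simpa [conjTranspose_eq_transpose_of_trivial] using h.eq,
    dotProduct_comm]

lemma inv_sub_inv_psd {ι : Type*} [Fintype ι] [DecidableEq ι] {X Y : Matrix ι ι ℝ}
    (hX : X.PosDef) (hY : Y.PosDef) (h : (Y - X).PosSemidef) :
    (X⁻¹ - Y⁻¹).PosSemidef := by
  have hXu : IsUnit X.det := isUnit_iff_isUnit_det X |>.mp hX.isUnit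
  have hYu : IsUnit Y.det := isUnit_iff_isUnit_det Y |>.mp hY.isUnit
  refine PosSemidef.of_dotProduct_mulVec_nonneg (hX.inv.isHermitian.sub hY.inv.isHermitian) fun u => ?_
  simp only [star_trivial, sub_mulVec, dotProduct_sub, sub_nonneg]
  set v : ι → ℝ := Y⁻¹ *ᵥ u with hv
  set w : ι → ℝ := X⁻¹ *ᵥ u with hw
  have hYv : Y *ᵥ v = u := by rw [hv, mulVec_mulVec, mul_nonsing_inv _ hYu, one_mulVec]
  have hXw : X *ᵥ w = u := by rw [hw, mulVec_mulVec, mul_nonsing_inv _ hXu, one_mulVec]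
  set t : ℝ := u ⬝ᵥ (Y⁻¹ *ᵥ u) with ht
  set r : ℝ := u ⬝ᵥ (X⁻¹ *ᵥ u) with hr
  have htv : t = v ⬝ᵥ (Y *ᵥ v) := by rw [hYv, dotProduct_comm]
  have ht0 : 0 ≤ t := htv ▸ dot_mulVec_psd_nonneg hY.posSemidef v
  have hr0 : 0 ≤ r := dot_mulVec_psd_nonneg hX.inv.posSemidef u
  have hwXw : w ⬝ᵥ (X *ᵥ w) = r := by rw [hXw, dotProduct_comm]
  have hvXv : v ⬝ᵥ (X *ᵥ v) ≤ t := by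
    have := dot_mulVec_psd_nonneg h v
    rw [sub_mulVec, dotProduct_sub, sub_nonneg] at this
    exact this.trans_eq htv.symm
  have hcs : v ⬝ᵥ (X *ᵥ w) ≤ Real.sqrt (v ⬝ᵥ (X *ᵥ v)) * Real.sqrt (w ⬝ᵥ (X *ᵥ w)) :=
    psd_cs hX.posSemidef v w
  have hvXw : v ⬝ᵥ (X *ᵥ w) = t := by rw [hXw, dotProduct_comm]
  have key : t ≤ Real.sqrt t * Real.sqrt r := by
    calc t = v ⬝ᵥ (X *ᵥ w) := hvXw.symm
      _ ≤ Real.sqrt (v ⬝ᵥ (X *ᵥ v)) * Real.sqrt (w ⬝ᵥ (X *ᵥ w)) := hcs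
      _ ≤ Real.sqrt t * Real.sqrt r := by
          rw [hwXw]
          gcongr
  nlinarith [Real.sq_sqrt ht0, Real.sq_sqrt hr0, Real.sqrt_nonneg t, Real.sqrt_nonneg r,
    sq_nonneg (Real.sqrt t - Real.sqrt r)]

lemma herm_sq_dot {ι : Type*} [Fintype ι] {s : Matrix ι ι ℝ} (hs : s.IsHermitian)
    (c d : ι → ℝ) : c ⬝ᵥ ((s * s) *ᵥ d) = (s *ᵥ c) ⬝ᵥ (s *ᵥ d) := by
  rw [← mulVec_mulVec, dotProduct_mulVec c s, ← mulVec_transpose]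
  congr 1
  rw [show sᵀ = s from by simpa [conjTranspose_eq_transpose_of_trivial] using hs.eq]

lemma norm_symm_eq_sqrt {ι : Type*} [Fintype ι] (v : ι → ℝ) :
    ‖((WithLp.equiv 2 (ι → ℝ)).symm v : EuclideanSpace ℝ ι)‖ = Real.sqrt (v ⬝ᵥ v) := by
  rw [← norm_symm_sq v, Real.sqrt_sq (norm_nonneg _)]

open scoped Matrix.Norms.L2Operator MatrixOrder in
lemma specNorm_mono {ι : Type*} [Fintype ι] [DecidableEq ι]
    {P Q : Matrix ι ι ℝ} (hP : P.PosSemidef) (h : (Q - P).PosSemidef) :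
    specNorm P ≤ specNorm Q := by
  rw [specNorm_eq, specNorm_eq]
  set s := CFC.sqrt P with hsdef
  have hs : s.IsHermitian := (CFC.sqrt_nonneg P).posSemidef.isHermitian
  have hss : s * s = P := CFC.sqrt_mul_sqrt_self P hP.nonneg
  have hsH : sᴴ = s := hs.eq
  have hQ0 : (0:ℝ) ≤ ‖Q‖ := norm_nonneg _
  have hnorm : ‖s‖ ≤ Real.sqrt ‖Q‖ := by
    rw [Matrix.l2_opNorm_def]
    apply ContinuousLinearMap.opNorm_le_bound _ (by positivity)
    intro x
    set v : ι → ℝ := WithLp.equiv 2 (ι → ℝ) x with hvdef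
    have hx : ((WithLp.equiv 2 (ι → ℝ)).symm v : EuclideanSpace ℝ ι) = x := rfl
    have happ : (Matrix.toEuclideanLin.trans LinearMap.toContinuousLinearMap) s x =
        ((WithLp.equiv 2 (ι → ℝ)).symm (s *ᵥ v) : EuclideanSpace ℝ ι) := rfl
    rw [happ, norm_symm_eq_sqrt]
    have h1 : (s *ᵥ v) ⬝ᵥ (s *ᵥ v) = v ⬝ᵥ (P *ᵥ v) := by rw [← hss, herm_sq_dot hs]
    have h2 : v ⬝ᵥ (P *ᵥ v) ≤ v ⬝ᵥ (Q *ᵥ v) := by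
      have := dot_mulVec_psd_nonneg h v
      rw [sub_mulVec, dotProduct_sub, sub_nonneg] at this
      exact this
    have h3 : v ⬝ᵥ (Q *ᵥ v) ≤ ‖Q‖ * ‖x‖ ^ 2 := by
      calc v ⬝ᵥ (Q *ᵥ v) ≤ Real.sqrt (v ⬝ᵥ v) * Real.sqrt ((Q *ᵥ v) ⬝ᵥ (Q *ᵥ v)) := dot_cs _ _
        _ = ‖x‖ * ‖((WithLp.equiv 2 (ι → ℝ)).symm (Q *ᵥ v) : EuclideanSpace ℝ ι)‖ := by
            rw [← norm_symm_eq_sqrt, ← norm_symm_eq_sqrt, hx]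
        _ ≤ ‖x‖ * (‖Q‖ * ‖x‖) := by
            have := Matrix.l2_opNorm_mulVec Q x
            exact mul_le_mul_of_nonneg_left this (norm_nonneg _)
        _ = ‖Q‖ * ‖x‖ ^ 2 := by ring
    rw [show Real.sqrt ‖Q‖ * ‖x‖ = Real.sqrt (‖Q‖ * ‖x‖ ^ 2) by
      rw [Real.sqrt_mul hQ0, Real.sqrt_sq (norm_nonneg _)]]
    exact Real.sqrt_le_sqrt ((h1 ▸ h2).trans h3)
  calc ‖P‖ = ‖sᴴ * s‖ := by rw [hsH, hss]
    _ = ‖s‖ * ‖s‖ := Matrix.l2_opNorm_conjTranspose_mul_self s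
    _ ≤ Real.sqrt ‖Q‖ * Real.sqrt ‖Q‖ := by
        have h0 : (0:ℝ) ≤ ‖s‖ := norm_nonneg _
        exact mul_le_mul hnorm hnorm h0 (Real.sqrt_nonneg _)
    _ = ‖Q‖ := Real.mul_self_sqrt hQ0

lemma psd_conj_t {ι κ : Type*} [Fintype ι] [Fintype κ] {A : Matrix ι ι ℝ} (hA : A.PosSemidef)
    (B : Matrix κ ι ℝ) : (B * A * Bᵀ).PosSemidef := by
  simpa [conjTranspose_eq_transpose_of_trivial] using hA.mul_mul_conjTranspose_same B

lemma psd_t_conj {ι κ : Type*} [Fintype ι] [Fintype κ] {A : Matrix ι ι ℝ} (hA : A.PosSemidef)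
    (B : Matrix ι κ ℝ) : (Bᵀ * A * B).PosSemidef := by
  simpa [conjTranspose_eq_transpose_of_trivial] using hA.conjTranspose_mul_mul_same B

lemma posDef_conj {ι : Type*} [Fintype ι] [DecidableEq ι] {T : Matrix ι ι ℝ} (hT : T.PosDef)
    {E : Matrix ι ι ℝ} (hE : IsUnit E.det) : (E * T * Eᵀ).PosDef := by
  have hTh : Tᵀ = T := by simpa [conjTranspose_eq_transpose_of_trivial] using hT.isHermitian.eq
  refine PosDef.of_dotProduct_mulVec_pos ?_ fun x hx => ?_
  · show (E * T * Eᵀ)ᴴ = E * T * Eᵀ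
    simp [conjTranspose_eq_transpose_of_trivial, transpose_mul, hTh, Matrix.mul_assoc]
  · have hEt : IsUnit (Eᵀ).det := by simpa [det_transpose] using hE
    have hy : Eᵀ *ᵥ x ≠ 0 := by
      intro h0
      apply hx
      have h1 := congrArg (fun w => (Eᵀ)⁻¹ *ᵥ w) h0
      simpa [mulVec_mulVec, nonsing_inv_mul _ hEt, one_mulVec] using h1
    have h2 := hT.dotProduct_mulVec_pos hy
    simp only [star_trivial] at h2 ⊢
    calc (0:ℝ) < (Eᵀ *ᵥ x) ⬝ᵥ (T *ᵥ (Eᵀ *ᵥ x)) := h2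
      _ = x ⬝ᵥ ((E * T * Eᵀ) *ᵥ x) := by
          rw [← mulVec_mulVec, ← mulVec_mulVec, dotProduct_mulVec x E, ← mulVec_transpose]

/-- For any feedback `K` with `A + BK` invertible, the DC closed-loop gain
satisfies `‖[I; RK](A + BK)⁻¹H‖ ≥ ‖Hᵀ(A² + B(RᵀR)⁻¹Bᵀ)⁻¹H‖^{1/2}`. -/
theorem stmt9
    {n m p : ℕ}
    (A : Matrix (Fin n) (Fin n) ℝ) (hA : (-A).PosDef)
    (B : Matrix (Fin n) (Fin m) ℝ)
    (H : Matrix (Fin n) (Fin p) ℝ)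
    (R : Matrix (Fin m) (Fin m) ℝ) (hR : (Rᵀ * R).PosDef)
    (K : Matrix (Fin m) (Fin n) ℝ) (hK : IsUnit (A + B * K).det) :
    Real.sqrt (specNorm (Hᵀ * (A * A + B * (Rᵀ * R)⁻¹ * Bᵀ)⁻¹ * H)) ≤
      specNorm (fromRows (1 : Matrix (Fin n) (Fin n) ℝ) (R * K) * (A + B * K)⁻¹ * H) := by
  -- basic facts
  have hAt : Aᵀ = A := by
    have := hA.isHermitian.eq
    simp only [conjTranspose_eq_transpose_of_trivial, transpose_neg, neg_inj] at this
    exact this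
  have hAdet : IsUnit A.det := by
    have h1 : IsUnit (-A) := hA.isUnit
    have h2 : IsUnit A := by simpa using h1.neg
    exact (isUnit_iff_isUnit_det A).mp h2
  have hRdet : IsUnit R.det := by
    have h1 : (0:ℝ) < (Rᵀ * R).det := hR.det_pos
    rw [det_mul, det_transpose] at h1
    exact isUnit_iff_ne_zero.mpr (fun h0 => by simp [h0] at h1)
  -- notation
  set F : Matrix (Fin n) (Fin n) ℝ := A + B * K with hFdef
  set U : Matrix (Fin n ⊕ Fin m) (Fin n) ℝ := fromRows 1 (R * K) with hUdef
  set C : Matrix (Fin n) (Fin n ⊕ Fin m) ℝ := fromCols A (B * R⁻¹) with hCdef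
  set W : Matrix (Fin n) (Fin n) ℝ := A * A + B * (Rᵀ * R)⁻¹ * Bᵀ with hWdef
  set T : Matrix (Fin n) (Fin n) ℝ := 1 + (R * K)ᵀ * (R * K) with hTdef
  -- T = Uᵀ * U
  have hTU : Uᵀ * U = T := by
    rw [hUdef, transpose_fromRows, fromCols_mul_fromRows, transpose_one, Matrix.one_mul]
  have hT : T.PosDef := by
    rw [hTdef]
    refine Matrix.PosDef.add_posSemidef Matrix.PosDef.one ?_
    simpa [conjTranspose_eq_transpose_of_trivial] using posSemidef_conjTranspose_mul_self (R * K)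
  have hTdet : IsUnit T.det := (isUnit_iff_isUnit_det T).mp hT.isUnit
  have hTt : Tᵀ = T := by
    simpa [conjTranspose_eq_transpose_of_trivial] using hT.isHermitian.eq
  -- C * U = F, C * Cᵀ = W
  have hCU : C * U = F := by
    rw [hCdef, hUdef, fromCols_mul_fromRows, Matrix.mul_one, hFdef, Matrix.mul_assoc,
      ← Matrix.mul_assoc R⁻¹ R K, nonsing_inv_mul _ hRdet, Matrix.one_mul]
  have hCC : C * Cᵀ = W := by
    rw [hCdef, transpose_fromCols, fromCols_mul_fromRows, hAt, hWdef]
    congr 1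
    rw [transpose_mul, transpose_nonsing_inv, Matrix.mul_inv_rev, Matrix.mul_assoc,
      ← Matrix.mul_assoc R⁻¹, ← Matrix.mul_assoc B, ← Matrix.mul_assoc B]
  -- projection
  set P : Matrix (Fin n ⊕ Fin m) (Fin n ⊕ Fin m) ℝ := U * T⁻¹ * Uᵀ with hPdef
  have hPP : P * P = P := by
    rw [hPdef]
    simp only [Matrix.mul_assoc]
    rw [← Matrix.mul_assoc Uᵀ U, hTU, ← Matrix.mul_assoc T T⁻¹, mul_nonsing_inv _ hTdet,
      Matrix.one_mul]
  have hPt : Pᵀ = P := by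
    rw [hPdef, transpose_mul, transpose_mul, transpose_transpose, transpose_nonsing_inv, hTt,
      Matrix.mul_assoc]
  have h1P : ((1 : Matrix (Fin n ⊕ Fin m) (Fin n ⊕ Fin m) ℝ) - P).PosSemidef := by
    have hexp : ((1:Matrix (Fin n ⊕ Fin m) (Fin n ⊕ Fin m) ℝ) - P)ᵀ * (1 - P) = 1 - P := by
      rw [transpose_sub, transpose_one, hPt]
      have : ((1:Matrix (Fin n ⊕ Fin m) (Fin n ⊕ Fin m) ℝ) - P) * (1 - P)
          = 1 - P - P + P * P := by noncomm_ring
      rw [this, hPP]; abel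
    have := posSemidef_conjTranspose_mul_self ((1:Matrix (Fin n ⊕ Fin m) (Fin n ⊕ Fin m) ℝ) - P)
    rw [conjTranspose_eq_transpose_of_trivial, hexp] at this
    exact this
  -- W - F T⁻¹ Fᵀ is PSD
  have hWsub : (W - F * T⁻¹ * Fᵀ).PosSemidef := by
    have hconj := psd_conj_t h1P C
    have hEq : C * (1 - P) * Cᵀ = W - F * T⁻¹ * Fᵀ := by
      rw [Matrix.mul_sub, Matrix.mul_one, Matrix.sub_mul, hCC, hPdef]
      congr 1
      rw [← hCU, transpose_mul]
      simp only [Matrix.mul_assoc]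
    rwa [hEq] at hconj
  -- positive definiteness
  have hAA : (A * A).PosDef := by
    have := posDef_conj (Matrix.PosDef.one (n := Fin n)) hAdet
    rwa [Matrix.mul_one, hAt] at this
  have hW : W.PosDef := by
    rw [hWdef]
    exact hAA.add_posSemidef (by
      simpa [Matrix.mul_assoc] using psd_conj_t hR.inv.posSemidef B)
  set X : Matrix (Fin n) (Fin n) ℝ := F * T⁻¹ * Fᵀ with hXdef
  have hX : X.PosDef := posDef_conj hT.inv hK
  have hInv : (X⁻¹ - W⁻¹).PosSemidef := inv_sub_inv_psd hX hW hWsub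
  -- X⁻¹ = Fᵀ⁻¹ * T * F⁻¹
  have hXinv : X⁻¹ = (Fᵀ)⁻¹ * T * F⁻¹ := by
    rw [hXdef, Matrix.mul_inv_rev, Matrix.mul_inv_rev, nonsing_inv_nonsing_inv _ hTdet,
      Matrix.mul_assoc]
  -- G
  set G : Matrix (Fin n ⊕ Fin m) (Fin p) ℝ := U * F⁻¹ * H with hGdef
  have hGtG : Gᵀ * G = Hᵀ * X⁻¹ * H := by
    rw [hGdef, transpose_mul, transpose_mul, hXinv, transpose_nonsing_inv, ← hTU]
    simp only [Matrix.mul_assoc]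
  -- assemble
  have hPSD1 : (Hᵀ * W⁻¹ * H).PosSemidef := psd_t_conj hW.inv.posSemidef H
  have hdiff : (Gᵀ * G - Hᵀ * W⁻¹ * H).PosSemidef := by
    have := psd_t_conj hInv H
    have hEq : Hᵀ * (X⁻¹ - W⁻¹) * H = Gᵀ * G - Hᵀ * W⁻¹ * H := by
      rw [Matrix.mul_sub, Matrix.sub_mul, hGtG]
    rwa [hEq] at this
  have hle : specNorm (Hᵀ * W⁻¹ * H) ≤ specNorm (Gᵀ * G) := specNorm_mono hPSD1 hdiff
  have hGnn : (0:ℝ) ≤ specNorm G := by rw [specNorm_eq]; exact norm_nonneg _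
  have heq : specNorm (Gᵀ * G) = specNorm G * specNorm G := by
    rw [specNorm_eq, specNorm_eq, ← conjTranspose_eq_transpose_of_trivial]
    exact Matrix.l2_opNorm_conjTranspose_mul_self G
  calc Real.sqrt (specNorm (Hᵀ * W⁻¹ * H)) ≤ Real.sqrt (specNorm (Gᵀ * G)) :=
        Real.sqrt_le_sqrt hle
    _ = Real.sqrt (specNorm G * specNorm G) := by rw [heq]
    _ = specNorm G := Real.sqrt_mul_self hGnn
end

section
/- Let T := -[I, A⁻¹B(R*R)⁻¹R*] with A ∈ L(Z) self-adjoint strictly negative, B ∈ L(U,Z), R ∈ L(U,R') with R*R coercive. Then the pseudoinverse T† = T*(TT*)⁻¹ satisfies (T†)*T† = (TT*)⁻¹ = (I + A⁻¹B(R*R)⁻¹B*A⁻¹)⁻¹, and consequently ‖T†A⁻¹H‖² = ‖H*(A² + B(R*R)⁻¹B*)⁻¹H‖ for any H ∈ L(D,Z). -/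
open scoped RealInnerProductSpace
open ContinuousLinearMap

lemma adj_inv_self {Z : Type*} [NormedAddCommGroup Z] [InnerProductSpace ℝ Z] [CompleteSpace Z]
    (S V : Z →L[ℝ] Z) (hS : adjoint S = S) (h1 : S ∘L V = 1) :
    adjoint V = V := by
  have h3 : adjoint V ∘L S = 1 := by
    rw [← hS, ← adjoint_comp, h1]
    simp [one_def, adjoint_id]
  have h4 := congrArg (fun X => X ∘L V) h3
  simpa only [comp_assoc, h1, one_def, comp_id, id_comp] using h4

set_option maxHeartbeats 1000000

/-- With `T = -[I, A⁻¹B(R*R)⁻¹R*]`, the pseudoinverse `T† = T*(TT*)⁻¹`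
satisfies `(T†)*T† = (TT*)⁻¹ = (I + A⁻¹B(R*R)⁻¹B*A⁻¹)⁻¹`, and consequently
`‖T†A⁻¹H‖² = ‖H*(A² + B(R*R)⁻¹B*)⁻¹H‖` for any bounded `H`. -/
theorem stmt10
    {Z U R' D : Type*}
    [NormedAddCommGroup Z] [InnerProductSpace ℝ Z] [CompleteSpace Z]
    [NormedAddCommGroup U] [InnerProductSpace ℝ U] [CompleteSpace U]
    [NormedAddCommGroup R'] [InnerProductSpace ℝ R'] [CompleteSpace R']
    [NormedAddCommGroup D] [InnerProductSpace ℝ D] [CompleteSpace D]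
    (A : Z →L[ℝ] Z) (hA : IsSelfAdjoint A)
    (m : ℝ) (hm : 0 < m) (hAneg : ∀ z : Z, ⟪A z, z⟫ ≤ -m * ‖z‖ ^ 2)
    (B : U →L[ℝ] Z) (R : U →L[ℝ] R')
    (c : ℝ) (hc : 0 < c) (hR : ∀ u : U, c * ‖u‖ ^ 2 ≤ ⟪(adjoint R ∘L R) u, u⟫)
    (Ainv : Z →L[ℝ] Z) (hAinv₁ : A ∘L Ainv = 1) (hAinv₂ : Ainv ∘L A = 1)
    (RRinv : U →L[ℝ] U) (hRRinv₁ : (adjoint R ∘L R) ∘L RRinv = 1)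
    (hRRinv₂ : RRinv ∘L (adjoint R ∘L R) = 1)
    (T : WithLp 2 (Z × R') →L[ℝ] Z)
    (hT : T = -(((ContinuousLinearMap.id ℝ Z).coprod (Ainv ∘L B ∘L RRinv ∘L adjoint R)) ∘L
            (WithLp.prodContinuousLinearEquiv 2 ℝ Z R' : WithLp 2 (Z × R') →L[ℝ] Z × R')))
    -- `W` is the bounded inverse of `TT*`
    (W : Z →L[ℝ] Z) (hW₁ : (T ∘L adjoint T) ∘L W = 1) (hW₂ : W ∘L (T ∘L adjoint T) = 1)
    -- the pseudoinverse `T† = T*(TT*)⁻¹`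
    (Tdag : Z →L[ℝ] WithLp 2 (Z × R')) (hTdag : Tdag = adjoint T ∘L W)
    -- `Minv` is the bounded inverse of `M = A² + B(R*R)⁻¹B*`
    (Minv : Z →L[ℝ] Z)
    (hMinv₁ : (A ∘L A + B ∘L RRinv ∘L adjoint B) ∘L Minv = 1)
    (hMinv₂ : Minv ∘L (A ∘L A + B ∘L RRinv ∘L adjoint B) = 1)
    (H : D →L[ℝ] Z) :
    adjoint Tdag ∘L Tdag = W ∧
    W ∘L (1 + Ainv ∘L B ∘L RRinv ∘L adjoint B ∘L Ainv) = 1 ∧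
    (1 + Ainv ∘L B ∘L RRinv ∘L adjoint B ∘L Ainv) ∘L W = 1 ∧
    ‖Tdag ∘L Ainv ∘L H‖ ^ 2 = ‖adjoint H ∘L Minv ∘L H‖ := by
  have hASA : adjoint A = A := hA
  have hRRSA : adjoint (adjoint R ∘L R) = adjoint R ∘L R := by
    rw [adjoint_comp, adjoint_adjoint]
  have hAinvSA : adjoint Ainv = Ainv := adj_inv_self A Ainv hASA hAinv₁
  have hRRinvSA : adjoint RRinv = RRinv :=
    adj_inv_self (adjoint R ∘L R) RRinv hRRSA hRRinv₁
  -- pointwise inverse facts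
  have hA1 : ∀ z, A (Ainv z) = z := fun z => congrArg (fun f => f z) hAinv₁
  have hA2 : ∀ z, Ainv (A z) = z := fun z => congrArg (fun f => f z) hAinv₂
  have hRR2 : ∀ u, RRinv ((adjoint R) (R u)) = u := by
    intro u
    have := congrArg (fun f => f u) hRRinv₂
    simpa using this
  -- adjoint of T
  have hadjT : adjoint T = -(((WithLp.prodContinuousLinearEquiv 2 ℝ Z R').symm :
        Z × R' →L[ℝ] WithLp 2 (Z × R')) ∘L
      (ContinuousLinearMap.id ℝ Z).prod (R ∘L RRinv ∘L adjoint B ∘L Ainv)) := by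
    symm
    rw [eq_adjoint_iff]
    intro x y
    rw [hT]
    simp only [neg_apply, comp_apply, coprod_apply, inner_neg_left, inner_neg_right,
      WithLp.prod_inner_apply, ContinuousLinearEquiv.coe_coe,
      WithLp.prodContinuousLinearEquiv_apply, WithLp.prodContinuousLinearEquiv_symm_apply,
      prod_apply, id_apply, inner_add_right, WithLp.toLp_fst, WithLp.toLp_snd,
      WithLp.ofLp_fst, WithLp.ofLp_snd]
    congr 1
    rw [← adjoint_inner_right R, ← adjoint_inner_right RRinv, hRRinvSA,
      adjoint_inner_left B, ← adjoint_inner_right Ainv, hAinvSA]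
  -- T T* = 1 + Ainv B RRinv B* Ainv
  have hTT : T ∘L adjoint T = 1 + Ainv ∘L B ∘L RRinv ∘L adjoint B ∘L Ainv := by
    ext z
    rw [hadjT, hT]
    simp only [comp_apply, neg_apply, coprod_apply, map_neg, neg_neg, add_apply, one_apply_eq_self,
      ContinuousLinearEquiv.coe_coe, WithLp.prodContinuousLinearEquiv_apply,
      WithLp.prodContinuousLinearEquiv_symm_apply, prod_apply, id_apply,
      WithLp.toLp_fst, WithLp.toLp_snd, Equiv.apply_symm_apply, hRR2]
  -- conjunct 2 and 3
  have conj2 : W ∘L (1 + Ainv ∘L B ∘L RRinv ∘L adjoint B ∘L Ainv) = 1 := by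
    rw [← hTT]; exact hW₂
  have conj3 : (1 + Ainv ∘L B ∘L RRinv ∘L adjoint B ∘L Ainv) ∘L W = 1 := by
    rw [← hTT]; exact hW₁
  -- W is self-adjoint
  have hTTSA : adjoint (T ∘L adjoint T) = T ∘L adjoint T := by
    rw [adjoint_comp, adjoint_adjoint]
  have hWSA : adjoint W = W := adj_inv_self (T ∘L adjoint T) W hTTSA hW₁
  -- conjunct 1
  have hTTW : ∀ z, T (adjoint T (W z)) = z := by
    intro z
    have := congrArg (fun f => f z) hW₁
    simpa using this
  have conj1 : adjoint Tdag ∘L Tdag = W := by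
    rw [hTdag, adjoint_comp, adjoint_adjoint, hWSA]
    ext z
    simp only [comp_apply, hTTW]
  -- Ainv ∘ W ∘ Ainv = Minv
  have key : (A ∘L A + B ∘L RRinv ∘L adjoint B) ∘L (Ainv ∘L W ∘L Ainv) = 1 := by
    ext z
    have h5 := congrArg (fun f => A (f (Ainv z))) conj3
    simp only [comp_apply, add_apply, one_apply_eq_self, map_add, hA1] at h5
    simpa only [comp_apply, add_apply, one_apply_eq_self, hA1] using h5
  have hM2 : ∀ z, Minv ((A ∘L A + B ∘L RRinv ∘L adjoint B) z) = z := by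
    intro z
    have := congrArg (fun f => f z) hMinv₂
    simpa using this
  have hAWApt : ∀ z, Ainv (W (Ainv z)) = Minv z := by
    intro z
    have hk := congrArg (fun f => f z) key
    simp only [comp_apply, one_apply_eq_self] at hk
    calc Ainv (W (Ainv z))
        = Minv ((A ∘L A + B ∘L RRinv ∘L adjoint B) (Ainv (W (Ainv z)))) := (hM2 _).symm
      _ = Minv z := by rw [hk]
  -- conjunct 4
  refine ⟨conj1, conj2, conj3, ?_⟩
  rw [pow_two, ← norm_adjoint_comp_self]
  congr 1
  have hc1 : ∀ z, adjoint Tdag (Tdag z) = W z := fun z => congrArg (fun f => f z) conj1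
  rw [adjoint_comp Tdag (Ainv ∘L H), adjoint_comp Ainv H, hAinvSA]
  ext d
  simp only [comp_apply, hc1, hAWApt]
end

section
/- Let A ∈ L(Z) be self-adjoint and strictly negative and B ∈ L(U,Z), R ∈ L(U,R') with R*R coercive. Then A + B(R*R)⁻¹B*A⁻¹ is boundedly invertible, and for every real ω, jωI - (A + B(R*R)⁻¹B*A⁻¹) is boundedly invertible with (jωI - A - B(R*R)⁻¹B*A⁻¹)⁻¹ = -A M⁻¹_ω where M_ω := A² + B(R*R)⁻¹B* - jωA and M_ω is boundedly invertible. -/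
open scoped ComplexInnerProductSpace
open ContinuousLinearMap

lemma coercive_inv {Z : Type*}
    [NormedAddCommGroup Z] [InnerProductSpace ℂ Z] [CompleteSpace Z]
    (T : Z →L[ℂ] Z) (k : ℝ) (hk : 0 < k)
    (h : ∀ z : Z, k * ‖z‖ ^ 2 ≤ (⟪T z, z⟫).re) :
    ∃ W : Z →L[ℂ] Z, T ∘L W = 1 ∧ W ∘L T = 1 := by
  have hbd : ∀ (S : Z →L[ℂ] Z), (∀ z : Z, k * ‖z‖ ^ 2 ≤ (⟪S z, z⟫).re) →
      ∀ z : Z, k * ‖z‖ ≤ ‖S z‖ := by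
    intro S hS z
    rcases eq_or_ne z 0 with rfl | hz
    · simp
    have h1 : k * ‖z‖ ^ 2 ≤ ‖S z‖ * ‖z‖ := by
      calc k * ‖z‖ ^ 2 ≤ (⟪S z, z⟫).re := hS z
        _ ≤ ‖⟪S z, z⟫‖ := Complex.re_le_norm _
        _ ≤ ‖S z‖ * ‖z‖ := norm_inner_le_norm _ _
    have hz' : (0:ℝ) < ‖z‖ := norm_pos_iff.mpr hz
    nlinarith
  have hT : ∀ z, k * ‖z‖ ≤ ‖T z‖ := hbd T h
  have hadj : ∀ z : Z, k * ‖z‖ ^ 2 ≤ (⟪adjoint T z, z⟫).re := by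
    intro z
    have : ⟪adjoint T z, z⟫ = starRingEnd ℂ ⟪T z, z⟫ := by
      rw [adjoint_inner_left, inner_conj_symm]
    rw [this, Complex.conj_re]
    exact h z
  have hTadj : ∀ z, k * ‖z‖ ≤ ‖adjoint T z‖ := hbd (adjoint T) hadj
  have hanti : AntilipschitzWith ⟨k⁻¹, (le_of_lt (inv_pos.mpr hk))⟩ T := by
    apply T.antilipschitz_of_bound
    intro x
    have := hT x
    show ‖x‖ ≤ k⁻¹ * ‖T x‖
    rw [inv_mul_eq_div, le_div_iff₀ hk]
    linarith [hT x]
  have hinj : Function.Injective T := hanti.injective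
  have hclosed : IsClosed (Set.range T) := hanti.isClosed_range T.uniformContinuous
  have hrange : LinearMap.range (T : Z →ₗ[ℂ] Z) = ⊤ := by
    have hcl : IsClosed ((LinearMap.range (T : Z →ₗ[ℂ] Z) : Submodule ℂ Z) : Set Z) := by
      convert hclosed using 1
      exact LinearMap.coe_range _
    haveI : CompleteSpace (LinearMap.range (T : Z →ₗ[ℂ] Z) : Submodule ℂ Z) := hcl.completeSpace_coe
    rw [← Submodule.orthogonal_eq_bot_iff]
    rw [Submodule.eq_bot_iff]
    intro y hy
    have hTy : adjoint T y = 0 := by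
      have h0 : ⟪T (adjoint T y), y⟫ = 0 :=
        hy _ (LinearMap.mem_range_self _ _)
      have : ⟪adjoint T y, adjoint T y⟫ = (0:ℂ) := by
        rw [adjoint_inner_left, ← inner_conj_symm, h0, map_zero]
      exact inner_self_eq_zero.mp this
    have := hTadj y
    rw [hTy] at this
    simp only [norm_zero] at this
    have : ‖y‖ ≤ 0 := by
      by_contra hcon
      push_neg at hcon
      nlinarith
    exact norm_le_zero_iff.mp this
  have hker : LinearMap.ker (T : Z →ₗ[ℂ] Z) = ⊥ := LinearMap.ker_eq_bot.mpr hinj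
  let e := ContinuousLinearEquiv.ofBijective T hker hrange
  refine ⟨e.symm, ?_, ?_⟩
  · ext z
    simp only [coe_comp', Function.comp_apply, one_apply]
    exact e.apply_symm_apply z
  · ext z
    simp only [coe_comp', Function.comp_apply, one_apply]
    exact e.symm_apply_apply z

/-- `A + B(R*R)⁻¹B*A⁻¹` is boundedly invertible and for every real `ω`,
`jωI - (A + B(R*R)⁻¹B*A⁻¹)` is boundedly invertible with inverse `-A M_ω⁻¹`, where
`M_ω = A² + B(R*R)⁻¹B* - jωA` is boundedly invertible. -/
theorem stmt19
    {Z U R' : Type*}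
    [NormedAddCommGroup Z] [InnerProductSpace ℂ Z] [CompleteSpace Z]
    [NormedAddCommGroup U] [InnerProductSpace ℂ U] [CompleteSpace U]
    [NormedAddCommGroup R'] [InnerProductSpace ℂ R'] [CompleteSpace R']
    (A : Z →L[ℂ] Z) (hA : IsSelfAdjoint A)
    (m : ℝ) (hm : 0 < m) (hAneg : ∀ z : Z, (⟪A z, z⟫).re ≤ -m * ‖z‖ ^ 2)
    (B : U →L[ℂ] Z) (R : U →L[ℂ] R')
    (c : ℝ) (hc : 0 < c) (hR : ∀ u : U, c * ‖u‖ ^ 2 ≤ (⟪(adjoint R ∘L R) u, u⟫).re)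
    (Ainv : Z →L[ℂ] Z) (hAinv₁ : A ∘L Ainv = 1) (hAinv₂ : Ainv ∘L A = 1)
    (RRinv : U →L[ℂ] U) (hRRinv₁ : (adjoint R ∘L R) ∘L RRinv = 1)
    (hRRinv₂ : RRinv ∘L (adjoint R ∘L R) = 1)
    (Acl : Z →L[ℂ] Z) (hAcl : Acl = A + B ∘L RRinv ∘L adjoint B ∘L Ainv) :
    (∃ V : Z →L[ℂ] Z, Acl ∘L V = 1 ∧ V ∘L Acl = 1) ∧
    ∀ ω : ℝ, ∀ Mω : Z →L[ℂ] Z,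
      Mω = A ∘L A + B ∘L RRinv ∘L adjoint B - ((ω : ℂ) * Complex.I) • A →
      ∃ W : Z →L[ℂ] Z, (Mω ∘L W = 1 ∧ W ∘L Mω = 1) ∧
        ((((ω : ℂ) * Complex.I) • (1 : Z →L[ℂ] Z) - Acl) ∘L (-(A ∘L W)) = 1 ∧
         (-(A ∘L W)) ∘L (((ω : ℂ) * Complex.I) • (1 : Z →L[ℂ] Z) - Acl) = 1) := by
  have hAi1 : ∀ z, A (Ainv z) = z := fun z => by
    simpa using ContinuousLinearMap.ext_iff.mp hAinv₁ z
  have hAi2 : ∀ z, Ainv (A z) = z := fun z => by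
    simpa using ContinuousLinearMap.ext_iff.mp hAinv₂ z
  have hRi1 : ∀ u, (adjoint R) (R (RRinv u)) = u := fun u => by
    simpa using ContinuousLinearMap.ext_iff.mp hRRinv₁ u
  have hAsym : ∀ x y : Z, ⟪A x, y⟫ = ⟪x, A y⟫ := fun x y => by
    conv_lhs => rw [← hA.adjoint_eq]
    exact adjoint_inner_left A y x
  have hAlow : ∀ z, m * ‖z‖ ≤ ‖A z‖ := by
    intro z
    rcases eq_or_ne z 0 with rfl | hz
    · simp
    have h1 : m * ‖z‖ ^ 2 ≤ ‖A z‖ * ‖z‖ := by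
      calc m * ‖z‖ ^ 2 ≤ -(⟪A z, z⟫).re := by linarith [hAneg z]
        _ ≤ |(⟪A z, z⟫).re| := neg_le_abs _
        _ ≤ ‖⟪A z, z⟫‖ := by
            exact Complex.abs_re_le_norm _
        _ ≤ ‖A z‖ * ‖z‖ := norm_inner_le_norm _ _
    have hz' : (0:ℝ) < ‖z‖ := norm_pos_iff.mpr hz
    exact le_of_mul_le_mul_right (by nlinarith) hz'
  have hAim : ∀ z : Z, (⟪A z, z⟫).im = 0 := by
    intro z
    have h1 : starRingEnd ℂ ⟪A z, z⟫ = ⟪A z, z⟫ := by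
      rw [inner_conj_symm, hAsym]
    exact Complex.conj_eq_iff_im.mp h1
  have key : ∀ ω : ℝ, ∀ Mω : Z →L[ℂ] Z,
      Mω = A ∘L A + B ∘L RRinv ∘L adjoint B - ((ω : ℂ) * Complex.I) • A →
      ∃ W : Z →L[ℂ] Z, (Mω ∘L W = 1 ∧ W ∘L Mω = 1) ∧
        ((((ω : ℂ) * Complex.I) • (1 : Z →L[ℂ] Z) - Acl) ∘L (-(A ∘L W)) = 1 ∧
         (-(A ∘L W)) ∘L (((ω : ℂ) * Complex.I) • (1 : Z →L[ℂ] Z) - Acl) = 1) := by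
    intro ω Mω hM
    have hMz : ∀ z, Mω z = A (A z) + B (RRinv (adjoint B z))
        - ((ω : ℂ) * Complex.I) • A z := by
      intro z; rw [hM]; rfl
    have hco : ∀ z, m ^ 2 * ‖z‖ ^ 2 ≤ (⟪Mω z, z⟫).re := by
      intro z
      rw [hMz, inner_sub_left, inner_add_left, inner_smul_left]
      simp only [Complex.sub_re, Complex.add_re]
      have t1 : (⟪A (A z), z⟫).re = ‖A z‖ ^ 2 := by
        rw [hAsym (A z) z]
        exact_mod_cast inner_self_eq_norm_sq (𝕜 := ℂ) (A z)
      have t1b : m ^ 2 * ‖z‖ ^ 2 ≤ ‖A z‖ ^ 2 := by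
        have h2 := mul_self_le_mul_self (mul_nonneg hm.le (norm_nonneg z)) (hAlow z)
        nlinarith [h2]
      have t2 : 0 ≤ (⟪B (RRinv (adjoint B z)), z⟫).re := by
        have hbw : ⟪B (RRinv (adjoint B z)), z⟫
            = ⟪RRinv (adjoint B z), adjoint B z⟫ :=
          (adjoint_inner_right B _ z).symm
        have hv : (adjoint R ∘L R) (RRinv (adjoint B z)) = adjoint B z := by
          simpa using hRi1 (adjoint B z)
        have hconj : ⟪RRinv (adjoint B z), adjoint B z⟫
            = starRingEnd ℂ ⟪(adjoint R ∘L R) (RRinv (adjoint B z)), RRinv (adjoint B z)⟫ := by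
          rw [inner_conj_symm, hv]
        rw [hbw, hconj, Complex.conj_re]
        have := hR (RRinv (adjoint B z))
        nlinarith [norm_nonneg (RRinv (adjoint B z)), hc.le]
      have t3 : (starRingEnd ℂ ((ω : ℂ) * Complex.I) * ⟪A z, z⟫).re = 0 := by
        simp [Complex.mul_re, hAim z]
      linarith
    obtain ⟨W, hW1, hW2⟩ := coercive_inv Mω (m ^ 2) (by positivity) hco
    have hW1' : ∀ z, Mω (W z) = z := fun z => by
      simpa using ContinuousLinearMap.ext_iff.mp hW1 z
    have hW2' : ∀ z, W (Mω z) = z := fun z => by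
      simpa using ContinuousLinearMap.ext_iff.mp hW2 z
    have hAclz : ∀ x, Acl x = A x + B (RRinv (adjoint B (Ainv x))) := by
      intro x; rw [hAcl]; rfl
    refine ⟨W, ⟨hW1, hW2⟩, ?_, ?_⟩
    · ext z
      simp only [coe_comp', Function.comp_apply, one_apply, sub_apply, smul_apply,
        neg_apply, ContinuousLinearMap.one_apply]
      have h1 : ((ω : ℂ) * Complex.I) • (-(A (W z))) - Acl (-(A (W z))) = Mω (W z) := by
        rw [hAclz, hMz]
        simp only [map_neg, hAi2, smul_neg]
        module
      calc ((ω : ℂ) * Complex.I) • (-(A (W z))) - Acl (-(A (W z)))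
          = Mω (W z) := h1
        _ = z := hW1' z
    · ext z
      simp only [coe_comp', Function.comp_apply, one_apply, sub_apply, smul_apply,
        neg_apply, ContinuousLinearMap.one_apply]
      have h1 : ((ω : ℂ) * Complex.I) • z - Acl z = Mω (-(Ainv z)) := by
        rw [hAclz, hMz]
        simp only [map_neg, hAi1, smul_neg]
        module
      rw [h1, hW2']
      simp [hAi1]
  refine ⟨?_, key⟩
  obtain ⟨W, ⟨hW1, hW2⟩, hE1, hE2⟩ := key 0
    (A ∘L A + B ∘L RRinv ∘L adjoint B - (((0:ℝ) : ℂ) * Complex.I) • A) rfl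
  refine ⟨A ∘L W, ?_, ?_⟩
  · ext z
    have := ContinuousLinearMap.ext_iff.mp hE1 z
    simpa using this
  · ext z
    have := ContinuousLinearMap.ext_iff.mp hE2 z
    simpa using this
end
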